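/- arXiv:2512.17118 — 8 statements merged into one kernel-verified Lean document; each statement's English description precedes it below -/
import Mathlib

section
/- Let F be a field. For all x, y ∈ F** := F \ {0,1}, the equality {x} + {1−x} = {y} + {1−y} holds in the pre-Bloch group P(F). (In particular the element c_F := {x} + {1−x} is independent of the choice of x ∈ F**.) -/
/-- The five-term (pentagon) relations inside the free abelian group on
`F** = F \ {0,1}`: for `x ≠ y` in `F**`, the element
`{x} - {y} + {y/x} + {(1-x)/(1-y)} - {y(1-x)/(x(1-y))}`. -/
def fiveTermSet (F : Type*) [Field F] :
    Set (FreeAbelianGroup {z : F // z ≠ 0 ∧ z ≠ 1}) :=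
  { r | ∃ (x y : F) (hx : x ≠ 0 ∧ x ≠ 1) (hy : y ≠ 0 ∧ y ≠ 1) (_ : x ≠ y)
      (h1 : y / x ≠ 0 ∧ y / x ≠ 1)
      (h2 : (1 - x) / (1 - y) ≠ 0 ∧ (1 - x) / (1 - y) ≠ 1)
      (h3 : y * (1 - x) / (x * (1 - y)) ≠ 0 ∧ y * (1 - x) / (x * (1 - y)) ≠ 1),
      r = FreeAbelianGroup.of ⟨x, hx⟩ - FreeAbelianGroup.of ⟨y, hy⟩
          + FreeAbelianGroup.of ⟨y / x, h1⟩
          + FreeAbelianGroup.of ⟨(1 - x) / (1 - y), h2⟩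
          - FreeAbelianGroup.of ⟨y * (1 - x) / (x * (1 - y)), h3⟩ }

/-- The pre-Bloch group (scissors congruence group) `P(F)`: the quotient of the
free abelian group on `F** = F \ {0,1}` by the subgroup generated by the
five-term relations. -/
abbrev PreBloch (F : Type*) [Field F] :=
  FreeAbelianGroup {z : F // z ≠ 0 ∧ z ≠ 1} ⧸ AddSubgroup.closure (fiveTermSet F)

/-- The class `{z} ∈ P(F)` of a generator `z ∈ F**`. -/
def br {F : Type*} [Field F] (z : F) (h0 : z ≠ 0) (h1 : z ≠ 1) : PreBloch F :=
  QuotientAddGroup.mk (FreeAbelianGroup.of ⟨z, h0, h1⟩)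

lemma of_eq_of {F : Type*} [Field F] {a b : F} {ha : a ≠ 0 ∧ a ≠ 1} {hb : b ≠ 0 ∧ b ≠ 1}
    (e : a = b) :
    (FreeAbelianGroup.of ⟨a, ha⟩ : FreeAbelianGroup {z : F // z ≠ 0 ∧ z ≠ 1})
      = FreeAbelianGroup.of ⟨b, hb⟩ := by subst e; rfl

/-- For all `x, y ∈ F** = F \ {0,1}`, `{x} + {1-x} = {y} + {1-y}` in the
pre-Bloch group `P(F)`; in particular `c_F := {x} + {1-x}` is independent of
the choice of `x ∈ F**`. -/
theorem cF_well_defined (F : Type*) [Field F] (x y : F)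
    (hx0 : x ≠ 0) (hx1 : x ≠ 1) (hy0 : y ≠ 0) (hy1 : y ≠ 1) :
    br x hx0 hx1
      + br (1 - x) (sub_ne_zero.mpr (Ne.symm hx1)) (fun h => hx0 (sub_eq_self.mp h)) =
    br y hy0 hy1
      + br (1 - y) (sub_ne_zero.mpr (Ne.symm hy1)) (fun h => hy0 (sub_eq_self.mp h)) := by
  by_cases hxy : x = y
  · subst hxy; rfl
  have hx1' : (1 : F) - x ≠ 0 := sub_ne_zero.mpr (Ne.symm hx1)
  have hy1' : (1 : F) - y ≠ 0 := sub_ne_zero.mpr (Ne.symm hy1)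
  have hxy' : (1 : F) - y ≠ 1 - x := fun h => hxy (by linear_combination h)
  -- side conditions for the relation R(x, y)
  have h1 : y / x ≠ 0 ∧ y / x ≠ 1 :=
    ⟨div_ne_zero hy0 hx0, fun h => hxy ((div_eq_one_iff_eq hx0).mp h).symm⟩
  have h2 : (1 - x) / (1 - y) ≠ 0 ∧ (1 - x) / (1 - y) ≠ 1 :=
    ⟨div_ne_zero hx1' hy1', fun h => hxy (by
      have := (div_eq_one_iff_eq hy1').mp h; linear_combination -this)⟩
  have h3 : y * (1 - x) / (x * (1 - y)) ≠ 0 ∧ y * (1 - x) / (x * (1 - y)) ≠ 1 :=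
    ⟨div_ne_zero (mul_ne_zero hy0 hx1') (mul_ne_zero hx0 hy1'), fun h => hxy (by
      have := (div_eq_one_iff_eq (mul_ne_zero hx0 hy1')).mp h; linear_combination -this)⟩
  -- side conditions for the relation R(1-y, 1-x)
  have ha : (1 : F) - y ≠ 0 ∧ (1 : F) - y ≠ 1 :=
    ⟨hy1', fun h => hy0 (by linear_combination -h)⟩
  have hb : (1 : F) - x ≠ 0 ∧ (1 : F) - x ≠ 1 :=
    ⟨hx1', fun h => hx0 (by linear_combination -h)⟩
  have h1' : (1 - x) / (1 - y) ≠ 0 ∧ (1 - x) / (1 - y) ≠ 1 := h2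
  have h2' : (1 - (1 - y)) / (1 - (1 - x)) ≠ 0 ∧ (1 - (1 - y)) / (1 - (1 - x)) ≠ 1 := by
    rw [show (1 : F) - (1 - y) = y by ring, show (1 : F) - (1 - x) = x by ring]; exact h1
  have h3' : (1 - x) * (1 - (1 - y)) / ((1 - y) * (1 - (1 - x))) ≠ 0 ∧
      (1 - x) * (1 - (1 - y)) / ((1 - y) * (1 - (1 - x))) ≠ 1 := by
    rw [show (1 : F) - (1 - y) = y by ring, show (1 : F) - (1 - x) = x by ring]
    constructor
    · exact div_ne_zero (mul_ne_zero hx1' hy0) (mul_ne_zero hy1' hx0)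
    · intro h
      exact hxy (by
        have := (div_eq_one_iff_eq (mul_ne_zero hy1' hx0)).mp h; linear_combination -this)
  set r1 : FreeAbelianGroup {z : F // z ≠ 0 ∧ z ≠ 1} :=
    FreeAbelianGroup.of ⟨x, hx0, hx1⟩ - FreeAbelianGroup.of ⟨y, hy0, hy1⟩
      + FreeAbelianGroup.of ⟨y / x, h1⟩
      + FreeAbelianGroup.of ⟨(1 - x) / (1 - y), h2⟩
      - FreeAbelianGroup.of ⟨y * (1 - x) / (x * (1 - y)), h3⟩ with hr1
  set r2 : FreeAbelianGroup {z : F // z ≠ 0 ∧ z ≠ 1} :=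
    FreeAbelianGroup.of ⟨1 - y, ha⟩ - FreeAbelianGroup.of ⟨1 - x, hb⟩
      + FreeAbelianGroup.of ⟨(1 - x) / (1 - y), h1'⟩
      + FreeAbelianGroup.of ⟨(1 - (1 - y)) / (1 - (1 - x)), h2'⟩
      - FreeAbelianGroup.of ⟨(1 - x) * (1 - (1 - y)) / ((1 - y) * (1 - (1 - x))), h3'⟩ with hr2
  have m1 : r1 ∈ fiveTermSet F := ⟨x, y, ⟨hx0, hx1⟩, ⟨hy0, hy1⟩, hxy, h1, h2, h3, rfl⟩
  have m2 : r2 ∈ fiveTermSet F := ⟨1 - y, 1 - x, ha, hb, hxy', h1', h2', h3', rfl⟩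
  have key : FreeAbelianGroup.of ⟨x, hx0, hx1⟩
      + FreeAbelianGroup.of (⟨1 - x, sub_ne_zero.mpr (Ne.symm hx1),
          fun h => hx0 (sub_eq_self.mp h)⟩ : {z : F // z ≠ 0 ∧ z ≠ 1})
      - (FreeAbelianGroup.of ⟨y, hy0, hy1⟩
      + FreeAbelianGroup.of (⟨1 - y, sub_ne_zero.mpr (Ne.symm hy1),
          fun h => hy0 (sub_eq_self.mp h)⟩ : {z : F // z ≠ 0 ∧ z ≠ 1})) = r1 - r2 := by
    rw [hr1, hr2,
      of_eq_of (a := (1 - (1 - y)) / (1 - (1 - x))) (b := y / x) (hb := h1) (by ring),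
      of_eq_of (a := (1 - x) * (1 - (1 - y)) / ((1 - y) * (1 - (1 - x))))
        (b := y * (1 - x) / (x * (1 - y))) (hb := h3) (by ring)]
    abel
  rw [← sub_eq_zero]
  show (QuotientAddGroup.mk _ : PreBloch F) + QuotientAddGroup.mk _
      - (QuotientAddGroup.mk _ + QuotientAddGroup.mk _) = 0
  rw [← QuotientAddGroup.mk_add, ← QuotientAddGroup.mk_add, ← QuotientAddGroup.mk_sub]
  rw [QuotientAddGroup.eq_zero_iff, key]
  exact sub_mem (AddSubgroup.subset_closure m1) (AddSubgroup.subset_closure m2)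
end

section
/- Let F be a field of characteristic zero. For every x ∈ F** := F \ {0,1}, one has 3·({x} + {1−x}) = 2·{−1} in the pre-Bloch group P(F). (Equivalently, 3c_F = ⟨−1⟩ where c_F := {x} + {1−x} and ⟨−1⟩ = {−1} + {(−1)⁻¹} = 2{−1}.) -/
section Aux
variable {F : Type*} [Field F]

lemma br_congr {z w : F} (h : z = w) (hz0 : z ≠ 0) (hz1 : z ≠ 1)
    (hw0 : w ≠ 0) (hw1 : w ≠ 1) : br z hz0 hz1 = br w hw0 hw1 := by
  subst h; rfl

lemma rel5 (x y : F) (hx0 : x ≠ 0) (hx1 : x ≠ 1) (hy0 : y ≠ 0) (hy1 : y ≠ 1)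
    (hxy : x ≠ y)
    (h1 : y / x ≠ 0 ∧ y / x ≠ 1)
    (h2 : (1 - x) / (1 - y) ≠ 0 ∧ (1 - x) / (1 - y) ≠ 1)
    (h3 : y * (1 - x) / (x * (1 - y)) ≠ 0 ∧ y * (1 - x) / (x * (1 - y)) ≠ 1) :
    br x hx0 hx1 - br y hy0 hy1 + br (y / x) h1.1 h1.2
      + br ((1 - x) / (1 - y)) h2.1 h2.2
      - br (y * (1 - x) / (x * (1 - y))) h3.1 h3.2 = 0 := by
  have hmem : (FreeAbelianGroup.of ⟨x, hx0, hx1⟩ - FreeAbelianGroup.of ⟨y, hy0, hy1⟩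
      + FreeAbelianGroup.of ⟨y / x, h1⟩
      + FreeAbelianGroup.of ⟨(1 - x) / (1 - y), h2⟩
      - FreeAbelianGroup.of ⟨y * (1 - x) / (x * (1 - y)), h3⟩)
      ∈ AddSubgroup.closure (fiveTermSet F) :=
    AddSubgroup.subset_closure ⟨x, y, ⟨hx0, hx1⟩, ⟨hy0, hy1⟩, hxy, h1, h2, h3, rfl⟩
  show (QuotientAddGroup.mk _ : PreBloch F) - QuotientAddGroup.mk _ + QuotientAddGroup.mk _
      + QuotientAddGroup.mk _ - QuotientAddGroup.mk _ = 0
  rw [← QuotientAddGroup.mk_sub, ← QuotientAddGroup.mk_add, ← QuotientAddGroup.mk_add,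
    ← QuotientAddGroup.mk_sub]
  exact (QuotientAddGroup.eq_zero_iff _).mpr hmem

/-- Flexible form of the five-term relation, with the derived points as variables. -/
lemma rel5' (x y a b c : F) (ha : a = y / x) (hb : b = (1 - x) / (1 - y))
    (hc : c = y * (1 - x) / (x * (1 - y)))
    (hx0 : x ≠ 0) (hx1 : x ≠ 1) (hy0 : y ≠ 0) (hy1 : y ≠ 1) (hxy : x ≠ y)
    (ha0 : a ≠ 0) (ha1 : a ≠ 1) (hb0 : b ≠ 0) (hb1 : b ≠ 1)
    (hc0 : c ≠ 0) (hc1 : c ≠ 1) :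
    br x hx0 hx1 - br y hy0 hy1 + br a ha0 ha1 + br b hb0 hb1 - br c hc0 hc1 = 0 := by
  subst ha hb hc
  exact rel5 x y hx0 hx1 hy0 hy1 hxy ⟨ha0, ha1⟩ ⟨hb0, hb1⟩ ⟨hc0, hc1⟩

/-- `{x} + {1-x}` is independent of `x`. -/
lemma cF_const (x y : F) (hx0 : x ≠ 0) (hx1 : x ≠ 1) (hy0 : y ≠ 0) (hy1 : y ≠ 1)
    (hxy : x ≠ y) :
    br x hx0 hx1 + br (1 - x) (sub_ne_zero.mpr (Ne.symm hx1)) (fun h => hx0 (sub_eq_self.mp h))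
      = br y hy0 hy1 + br (1 - y) (sub_ne_zero.mpr (Ne.symm hy1))
          (fun h => hy0 (sub_eq_self.mp h)) := by
  have h1x0 : (1 : F) - x ≠ 0 := sub_ne_zero.mpr (Ne.symm hx1)
  have h1x1 : (1 : F) - x ≠ 1 := fun h => hx0 (sub_eq_self.mp h)
  have h1y0 : (1 : F) - y ≠ 0 := sub_ne_zero.mpr (Ne.symm hy1)
  have h1y1 : (1 : F) - y ≠ 1 := fun h => hy0 (sub_eq_self.mp h)
  have h1xy : (1 : F) - y ≠ 1 - x := fun h => hxy (by linear_combination h)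
  have ha0 : y / x ≠ 0 := div_ne_zero hy0 hx0
  have ha1 : y / x ≠ 1 := by
    intro h; exact hxy ((div_eq_one_iff_eq hx0).mp h).symm
  have hb0 : (1 - x) / (1 - y) ≠ 0 := div_ne_zero h1x0 h1y0
  have hb1 : (1 - x) / (1 - y) ≠ 1 := by
    intro h
    have := (div_eq_one_iff_eq h1y0).mp h
    exact hxy (by linear_combination -this)
  have hc0 : y * (1 - x) / (x * (1 - y)) ≠ 0 :=
    div_ne_zero (mul_ne_zero hy0 h1x0) (mul_ne_zero hx0 h1y0)
  have hc1 : y * (1 - x) / (x * (1 - y)) ≠ 1 := by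
    intro h
    have := (div_eq_one_iff_eq (mul_ne_zero hx0 h1y0)).mp h
    exact hxy (by linear_combination -this)
  have R1 := rel5' x y (y / x) ((1 - x) / (1 - y)) (y * (1 - x) / (x * (1 - y)))
    rfl rfl rfl hx0 hx1 hy0 hy1 hxy ha0 ha1 hb0 hb1 hc0 hc1
  have R2 := rel5' (1 - y) (1 - x) ((1 - x) / (1 - y)) (y / x) (y * (1 - x) / (x * (1 - y)))
    rfl (by rw [sub_sub_cancel, sub_sub_cancel])
    (by rw [sub_sub_cancel, sub_sub_cancel]; ring)
    h1y0 h1y1 h1x0 h1x1 h1xy hb0 hb1 ha0 ha1 hc0 hc1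
  have key : br x hx0 hx1 + br (1 - x) h1x0 h1x1 - (br y hy0 hy1 + br (1 - y) h1y0 h1y1)
      = (br x hx0 hx1 - br y hy0 hy1 + br (y / x) ha0 ha1
          + br ((1 - x) / (1 - y)) hb0 hb1
          - br (y * (1 - x) / (x * (1 - y))) hc0 hc1)
        - (br (1 - y) h1y0 h1y1 - br (1 - x) h1x0 h1x1
          + br ((1 - x) / (1 - y)) hb0 hb1 + br (y / x) ha0 ha1
          - br (y * (1 - x) / (x * (1 - y))) hc0 hc1) := by abel
  rw [R1, R2, sub_zero] at key
  exact sub_eq_zero.mp key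

/-- In characteristic zero, `{-1} + 3{2} = 0`. -/
lemma key_rel (F : Type*) [Field F] [CharZero F]
    (ha0 : (-1 : F) ≠ 0) (ha1 : (-1 : F) ≠ 1) (hb0 : (2 : F) ≠ 0) (hb1 : (2 : F) ≠ 1) :
    br (-1 : F) ha0 ha1 + 3 • br (2 : F) hb0 hb1 = 0 := by
  have e1 := rel5' (-2 : F) (-1/2) (1/4) 2 (1/2)
    (by norm_num) (by norm_num) (by norm_num) (by norm_num) (by norm_num) (by norm_num)
    (by norm_num) (by norm_num) (by norm_num) (by norm_num) (by norm_num) (by norm_num)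
    (by norm_num) (by norm_num)
  have e2 := rel5' (-1/2 : F) (1/4) (-1/2) 2 (-1)
    (by norm_num) (by norm_num) (by norm_num) (by norm_num) (by norm_num) (by norm_num)
    (by norm_num) (by norm_num) (by norm_num) (by norm_num) (by norm_num) (by norm_num)
    (by norm_num) (by norm_num)
  have e3 := rel5' (-1/3 : F) (1/3) (-1) 2 (-2)
    (by norm_num) (by norm_num) (by norm_num) (by norm_num) (by norm_num) (by norm_num)
    (by norm_num) (by norm_num) (by norm_num) (by norm_num) (by norm_num) (by norm_num)
    (by norm_num) (by norm_num)
  have e4 := rel5' (1/3 : F) (-1/3) (-1) (1/2) (-1/2)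
    (by norm_num) (by norm_num) (by norm_num) (by norm_num) (by norm_num) (by norm_num)
    (by norm_num) (by norm_num) (by norm_num) (by norm_num) (by norm_num) (by norm_num)
    (by norm_num) (by norm_num)
  have t12 := congrArg₂ (· + ·) e1 e2
  have t34 := congrArg₂ (· + ·) e3 e4
  have S := congrArg₂ (· + ·) t12 t34
  simp only [add_zero] at S
  rw [← S]
  abel

end Aux

/-- Over a field of characteristic zero, `3({x} + {1-x}) = 2{-1}` in the
pre-Bloch group `P(F)` for every `x ∈ F** = F \ {0,1}`; that is,
`3 c_F = ⟨-1⟩`. -/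
theorem three_cF_eq (F : Type*) [Field F] [CharZero F] (x : F)
    (hx0 : x ≠ 0) (hx1 : x ≠ 1) :
    3 • (br x hx0 hx1
        + br (1 - x) (sub_ne_zero.mpr (Ne.symm hx1)) (fun h => hx0 (sub_eq_self.mp h))) =
    2 • br (-1 : F) (neg_ne_zero.mpr one_ne_zero) (by norm_num) := by
  have h20 : (2 : F) ≠ 0 := two_ne_zero
  have h21 : (2 : F) ≠ 1 := by norm_num
  have ha0 : (-1 : F) ≠ 0 := neg_ne_zero.mpr one_ne_zero
  have ha1 : (-1 : F) ≠ 1 := by norm_num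
  have hmain : br x hx0 hx1
      + br (1 - x) (sub_ne_zero.mpr (Ne.symm hx1)) (fun h => hx0 (sub_eq_self.mp h))
      = br (2 : F) h20 h21 + br (-1 : F) ha0 ha1 := by
    by_cases hx2 : x = 2
    · subst hx2
      congr 1
      exact br_congr (by norm_num) _ _ _ _
    · rw [cF_const x 2 hx0 hx1 h20 h21 hx2]
      congr 1
      exact br_congr (by norm_num) _ _ _ _
  rw [hmain, ← sub_eq_zero]
  have key := key_rel F ha0 ha1 h20 h21
  rw [← key]
  abel
end

section
/- Let F be a field of characteristic zero containing an element s with s² = −3. Then for every x ∈ F** := F \ {0,1}, one has 2·({x} + {1−x}) = 0 in the pre-Bloch group P(F). -/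
theorem br_congr_s7 {F : Type*} [Field F] {z z' : F} (e : z = z')
    {h0 : z ≠ 0} {h1 : z ≠ 1} {h0' : z' ≠ 0} {h1' : z' ≠ 1} :
    br z h0 h1 = br z' h0' h1' := by subst e; rfl

theorem inv_ne_one' {F : Type*} [Field F] {a : F} (h : a ≠ 1) : a⁻¹ ≠ 1 :=
  fun e => h (inv_injective (by rw [e, inv_one]))

theorem rel {F : Type*} [Field F] (x y a b c : F)
    (hx0 : x ≠ 0) (hx1 : x ≠ 1) (hy0 : y ≠ 0) (hy1 : y ≠ 1) (hxy : x ≠ y)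
    (ha0 : a ≠ 0) (ha1 : a ≠ 1) (hb0 : b ≠ 0) (hb1 : b ≠ 1) (hc0 : c ≠ 0) (hc1 : c ≠ 1)
    (ea : a = y / x) (eb : b = (1 - x) / (1 - y)) (ec : c = y * (1 - x) / (x * (1 - y))) :
    br x hx0 hx1 - br y hy0 hy1 + br a ha0 ha1 + br b hb0 hb1 - br c hc0 hc1 = 0 := by
  subst ea eb ec
  show QuotientAddGroup.mk _ - QuotientAddGroup.mk _ + QuotientAddGroup.mk _
      + QuotientAddGroup.mk _ - QuotientAddGroup.mk _ = 0
  rw [← QuotientAddGroup.mk_sub, ← QuotientAddGroup.mk_add, ← QuotientAddGroup.mk_add,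
    ← QuotientAddGroup.mk_sub, QuotientAddGroup.eq_zero_iff]
  exact AddSubgroup.subset_closure
    ⟨x, y, ⟨hx0, hx1⟩, ⟨hy0, hy1⟩, hxy, ⟨ha0, ha1⟩, ⟨hb0, hb1⟩, ⟨hc0, hc1⟩, rfl⟩

theorem sigadd {F : Type*} [Field F] (a b : F)
    (ha0 : a ≠ 0) (ha1 : a ≠ 1) (hb0 : b ≠ 0) (hb1 : b ≠ 1)
    (hab0 : a * b ≠ 0) (hab1 : a * b ≠ 1)
    (hai0 : a⁻¹ ≠ 0) (hai1 : a⁻¹ ≠ 1) (hbi0 : b⁻¹ ≠ 0) (hbi1 : b⁻¹ ≠ 1)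
    (habi0 : (a * b)⁻¹ ≠ 0) (habi1 : (a * b)⁻¹ ≠ 1) :
    br a ha0 ha1 + br a⁻¹ hai0 hai1 + br b hb0 hb1 + br b⁻¹ hbi0 hbi1
      = br (a * b) hab0 hab1 + br (a * b)⁻¹ habi0 habi1 := by
  have hd : a * b - 1 ≠ 0 := sub_ne_zero.mpr hab1
  have hbm : b - 1 ≠ 0 := sub_ne_zero.mpr hb1
  set x : F := (b - 1) / (a * b - 1) with hxdef
  set y : F := a * x with hydef
  have hx0 : x ≠ 0 := div_ne_zero hbm hd
  have hx1 : x ≠ 1 := by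
    intro h
    rw [hxdef, div_eq_iff hd] at h
    have h2 : (a - 1) * b = 0 := by linear_combination -h
    rcases mul_eq_zero.mp h2 with h3 | h3
    · exact ha1 (by linear_combination h3)
    · exact hb0 h3
  have hy0 : y ≠ 0 := mul_ne_zero ha0 hx0
  have hy1 : y ≠ 1 := by
    intro h
    rw [hydef, hxdef, mul_div_assoc', div_eq_iff hd] at h
    exact ha1 (by linear_combination -h)
  have hxy : x ≠ y := by
    intro h
    rw [hydef] at h
    have := mul_right_cancel₀ hx0 (show (1 : F) * x = a * x by rw [one_mul, ← h])
    exact ha1 this.symm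
  have h1y : (1 : F) - y ≠ 0 := sub_ne_zero.mpr (Ne.symm hy1)
  have h1x : (1 : F) - x ≠ 0 := sub_ne_zero.mpr (Ne.symm hx1)
  have ea : a = y / x := (mul_div_cancel_right₀ a hx0).symm
  have eb : b = (1 - x) / (1 - y) := by
    rw [eq_div_iff h1y, hydef, hxdef]
    linear_combination (1 - b) * mul_inv_cancel₀ hd
  have ec : a * b = y * (1 - x) / (x * (1 - y)) := by
    rw [eq_div_iff (mul_ne_zero hx0 h1y), hydef, hxdef]
    field_simp
    ring
  have ea' : a⁻¹ = x / y := by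
    rw [eq_div_iff hy0, hydef]
    field_simp
  have eb' : b⁻¹ = (1 - y) / (1 - x) := by rw [eb, inv_div]
  have ec' : (a * b)⁻¹ = x * (1 - y) / (y * (1 - x)) := by rw [ec, inv_div]
  have h1 := rel x y a b (a * b) hx0 hx1 hy0 hy1 hxy ha0 ha1 hb0 hb1 hab0 hab1 ea eb ec
  have h2 := rel y x a⁻¹ b⁻¹ (a * b)⁻¹ hy0 hy1 hx0 hx1 (Ne.symm hxy)
    hai0 hai1 hbi0 hbi1 habi0 habi1 ea' eb' ec'
  have key : (br a ha0 ha1 + br a⁻¹ hai0 hai1 + br b hb0 hb1 + br b⁻¹ hbi0 hbi1)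
      - (br (a * b) hab0 hab1 + br (a * b)⁻¹ habi0 habi1)
      = (br x hx0 hx1 - br y hy0 hy1 + br a ha0 ha1 + br b hb0 hb1 - br (a * b) hab0 hab1)
      + (br y hy0 hy1 - br x hx0 hx1 + br a⁻¹ hai0 hai1 + br b⁻¹ hbi0 hbi1
          - br (a * b)⁻¹ habi0 habi1) := by abel
  rw [h1, h2, add_zero] at key
  exact sub_eq_zero.mp key

theorem cEq {F : Type*} [Field F] (x y : F)
    (hx0 : x ≠ 0) (hx1 : x ≠ 1) (hy0 : y ≠ 0) (hy1 : y ≠ 1) (hxy : x ≠ y)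
    (h1x0 : 1 - x ≠ 0) (h1x1 : 1 - x ≠ 1) (h1y0 : 1 - y ≠ 0) (h1y1 : 1 - y ≠ 1) :
    br x hx0 hx1 + br (1 - x) h1x0 h1x1 = br y hy0 hy1 + br (1 - y) h1y0 h1y1 := by
  have ha0 : y / x ≠ 0 := div_ne_zero hy0 hx0
  have ha1 : y / x ≠ 1 := by
    intro h; rw [div_eq_iff hx0, one_mul] at h; exact hxy h.symm
  have hb0 : (1 - x) / (1 - y) ≠ 0 := div_ne_zero h1x0 h1y0
  have hb1 : (1 - x) / (1 - y) ≠ 1 := by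
    intro h; rw [div_eq_iff h1y0, one_mul] at h; exact hxy (by linear_combination -h)
  have hab0 : y / x * ((1 - x) / (1 - y)) ≠ 0 := mul_ne_zero ha0 hb0
  have hab1 : y / x * ((1 - x) / (1 - y)) ≠ 1 := by
    intro h
    rw [div_mul_div_comm, div_eq_iff (mul_ne_zero hx0 h1y0), one_mul] at h
    exact hxy (by linear_combination -h)
  have hai0 : (y / x)⁻¹ ≠ 0 := inv_ne_zero ha0
  have hai1 : (y / x)⁻¹ ≠ 1 := inv_ne_one' ha1
  have hbi0 : ((1 - x) / (1 - y))⁻¹ ≠ 0 := inv_ne_zero hb0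
  have hbi1 : ((1 - x) / (1 - y))⁻¹ ≠ 1 := inv_ne_one' hb1
  have habi0 : (y / x * ((1 - x) / (1 - y)))⁻¹ ≠ 0 := inv_ne_zero hab0
  have habi1 : (y / x * ((1 - x) / (1 - y)))⁻¹ ≠ 1 := inv_ne_one' hab1
  have ec : y / x * ((1 - x) / (1 - y)) = y * (1 - x) / (x * (1 - y)) :=
    div_mul_div_comm _ _ _ _
  have h1 := rel x y (y / x) ((1 - x) / (1 - y)) (y / x * ((1 - x) / (1 - y)))
    hx0 hx1 hy0 hy1 hxy ha0 ha1 hb0 hb1 hab0 hab1 rfl rfl ec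
  have hxy' : (1 : F) - x ≠ 1 - y := fun h => hxy (by linear_combination -h)
  have ea2 : ((1 - x) / (1 - y))⁻¹ = (1 - y) / (1 - x) := inv_div _ _
  have eb2 : (y / x)⁻¹ = (1 - (1 - x)) / (1 - (1 - y)) := by
    rw [inv_div]; congr 1 <;> ring
  have ec2 : (y / x * ((1 - x) / (1 - y)))⁻¹
      = (1 - y) * (1 - (1 - x)) / ((1 - x) * (1 - (1 - y))) := by
    rw [ec, inv_div]; congr 1 <;> ring
  have h2 := rel (1 - x) (1 - y) ((1 - x) / (1 - y))⁻¹ (y / x)⁻¹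
    (y / x * ((1 - x) / (1 - y)))⁻¹ h1x0 h1x1 h1y0 h1y1 hxy'
    hbi0 hbi1 hai0 hai1 habi0 habi1 ea2 eb2 ec2
  have h3 := sigadd (y / x) ((1 - x) / (1 - y)) ha0 ha1 hb0 hb1 hab0 hab1
    hai0 hai1 hbi0 hbi1 habi0 habi1
  have key : (br x hx0 hx1 + br (1 - x) h1x0 h1x1)
      - (br y hy0 hy1 + br (1 - y) h1y0 h1y1)
      = (br x hx0 hx1 - br y hy0 hy1 + br (y / x) ha0 ha1
          + br ((1 - x) / (1 - y)) hb0 hb1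
          - br (y / x * ((1 - x) / (1 - y))) hab0 hab1)
      + (br (1 - x) h1x0 h1x1 - br (1 - y) h1y0 h1y1
          + br ((1 - x) / (1 - y))⁻¹ hbi0 hbi1 + br (y / x)⁻¹ hai0 hai1
          - br (y / x * ((1 - x) / (1 - y)))⁻¹ habi0 habi1)
      - ((br (y / x) ha0 ha1 + br (y / x)⁻¹ hai0 hai1
          + br ((1 - x) / (1 - y)) hb0 hb1 + br ((1 - x) / (1 - y))⁻¹ hbi0 hbi1)
        - (br (y / x * ((1 - x) / (1 - y))) hab0 hab1
          + br (y / x * ((1 - x) / (1 - y)))⁻¹ habi0 habi1)) := by abel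
  rw [h1, h2, sub_eq_zero_of_eq h3] at key
  simp only [add_zero, zero_add, sub_zero] at key
  exact sub_eq_zero.mp key


/-- Over a field of characteristic zero containing a square root `s` of `-3`,
`2({x} + {1-x}) = 0` in the pre-Bloch group `P(F)` for every
`x ∈ F** = F \ {0,1}`. -/
theorem two_cF_eq_zero (F : Type*) [Field F] [CharZero F]
    (s : F) (hs : s ^ 2 = -3) (x : F) (hx0 : x ≠ 0) (hx1 : x ≠ 1) :
    2 • (br x hx0 hx1
        + br (1 - x) (sub_ne_zero.mpr (Ne.symm hx1)) (fun h => hx0 (sub_eq_self.mp h))) = 0 := by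
  have htwo : (2 : F) ≠ 0 := two_ne_zero
  obtain ⟨ξ, hξdef⟩ : ∃ t : F, t = (1 + s) / 2 := ⟨_, rfl⟩
  have hξ2 : ξ * ξ = ξ - 1 := by
    rw [hξdef]; field_simp; linear_combination hs
  have hξ0 : ξ ≠ 0 := by
    intro h; rw [hξdef, div_eq_iff htwo] at h
    rw [show s = (-1 : F) by linear_combination h] at hs
    norm_num at hs
  have hξ1 : ξ ≠ 1 := by
    intro h; rw [hξdef, div_eq_iff htwo] at h
    rw [show s = (1 : F) by linear_combination h] at hs
    norm_num at hs
  have hξm1 : ξ ≠ -1 := by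
    intro h; rw [hξdef, div_eq_iff htwo] at h
    rw [show s = (-3 : F) by linear_combination h] at hs
    norm_num at hs
  have hu0 : ξ * ξ ≠ 0 := mul_ne_zero hξ0 hξ0
  have hu1 : ξ * ξ ≠ 1 := by
    intro h
    have h2 : ξ = 2 := by linear_combination h - hξ2
    rw [hξdef, div_eq_iff htwo] at h2
    rw [show s = (3 : F) by linear_combination h2] at hs
    norm_num at hs
  have huu : ξ * ξ * (ξ * ξ) = -ξ := by linear_combination (ξ * ξ + ξ) * hξ2
  have huu0 : ξ * ξ * (ξ * ξ) ≠ 0 := mul_ne_zero hu0 hu0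
  have huu1 : ξ * ξ * (ξ * ξ) ≠ 1 := by
    rw [huu]; intro h; exact hξm1 (by linear_combination -h)
  have hξi0 : ξ⁻¹ ≠ 0 := inv_ne_zero hξ0
  have hξi1 : ξ⁻¹ ≠ 1 := inv_ne_one' hξ1
  have hui0 : (ξ * ξ)⁻¹ ≠ 0 := inv_ne_zero hu0
  have hui1 : (ξ * ξ)⁻¹ ≠ 1 := inv_ne_one' hu1
  have huui0 : (ξ * ξ * (ξ * ξ))⁻¹ ≠ 0 := inv_ne_zero huu0
  have huui1 : (ξ * ξ * (ξ * ξ))⁻¹ ≠ 1 := inv_ne_one' huu1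
  have einv : ξ * ξ * (ξ * ξ) = (ξ * ξ)⁻¹ :=
    eq_inv_of_mul_eq_one_left (by linear_combination (ξ ^ 4 + ξ ^ 3 - ξ - 1) * hξ2)
  have einv2 : (ξ * ξ * (ξ * ξ))⁻¹ = ξ * ξ := by rw [einv, inv_inv]
  have e1ξ : (1 : F) - ξ = ξ⁻¹ :=
    eq_inv_of_mul_eq_one_left (by linear_combination -hξ2)
  have h1ξ0 : (1 : F) - ξ ≠ 0 := sub_ne_zero.mpr (Ne.symm hξ1)
  have h1ξ1 : (1 : F) - ξ ≠ 1 := fun h => hξ0 (sub_eq_self.mp h)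
  have A := sigadd ξ ξ hξ0 hξ1 hξ0 hξ1 hu0 hu1 hξi0 hξi1 hξi0 hξi1 hui0 hui1
  have B := sigadd (ξ * ξ) (ξ * ξ) hu0 hu1 hu0 hu1 huu0 huu1 hui0 hui1 hui0 hui1 huui0 huui1
  have eB1 : br (ξ * ξ * (ξ * ξ)) huu0 huu1 = br (ξ * ξ)⁻¹ hui0 hui1 := br_congr_s7 einv
  have eB2 : br (ξ * ξ * (ξ * ξ))⁻¹ huui0 huui1 = br (ξ * ξ) hu0 hu1 := br_congr_s7 einv2
  rw [eB1, eB2] at B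
  have hσu : br (ξ * ξ) hu0 hu1 + br (ξ * ξ)⁻¹ hui0 hui1 = 0 := by
    have key : br (ξ * ξ) hu0 hu1 + br (ξ * ξ)⁻¹ hui0 hui1
        = (br (ξ * ξ) hu0 hu1 + br (ξ * ξ)⁻¹ hui0 hui1 + br (ξ * ξ) hu0 hu1
            + br (ξ * ξ)⁻¹ hui0 hui1)
          - (br (ξ * ξ)⁻¹ hui0 hui1 + br (ξ * ξ) hu0 hu1) := by abel
    rw [B] at key
    simpa using key
  have h2σξ : 2 • (br ξ hξ0 hξ1 + br ξ⁻¹ hξi0 hξi1) = 0 := by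
    rw [two_smul]
    calc br ξ hξ0 hξ1 + br ξ⁻¹ hξi0 hξi1 + (br ξ hξ0 hξ1 + br ξ⁻¹ hξi0 hξi1)
        = br ξ hξ0 hξ1 + br ξ⁻¹ hξi0 hξi1 + br ξ hξ0 hξ1 + br ξ⁻¹ hξi0 hξi1 := by abel
      _ = br (ξ * ξ) hu0 hu1 + br (ξ * ξ)⁻¹ hui0 hui1 := A
      _ = 0 := hσu
  have e1ξbr : br (1 - ξ) h1ξ0 h1ξ1 = br ξ⁻¹ hξi0 hξi1 := br_congr_s7 e1ξ
  by_cases hxe : x = ξ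
  · subst hxe
    have target : 2 • (br x hξ0 hξ1 + br (1 - x) h1ξ0 h1ξ1) = 0 := by
      rw [e1ξbr]; exact h2σξ
    exact target
  · have hc := cEq x ξ hx0 hx1 hξ0 hξ1 hxe
      (sub_ne_zero.mpr (Ne.symm hx1)) (fun h => hx0 (sub_eq_self.mp h)) h1ξ0 h1ξ1
    rw [hc, e1ξbr]
    exact h2σξ
end

section
/- Let F be a field of characteristic zero containing elements i and s with i² = −1 and s² = −3. Then for every x ∈ F** := F \ {0,1}, one has {x} + {1−x} = 0 in the pre-Bloch group P(F) (i.e., the element c_F vanishes). -/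
/-- A five-term relation, with the last three entries given in any
syntactic form equal to the standard one. -/
lemma cF_rel_mem {F : Type*} [Field F] {x y a b c : F}
    (hx0 : x ≠ 0) (hx1 : x ≠ 1) (hy0 : y ≠ 0) (hy1 : y ≠ 1) (hxy : x ≠ y)
    (ha : a = y / x) (hb : b = (1 - x) / (1 - y)) (hc : c = y * (1 - x) / (x * (1 - y)))
    (ha0 : a ≠ 0) (ha1 : a ≠ 1) (hb0 : b ≠ 0) (hb1 : b ≠ 1) (hc0 : c ≠ 0) (hc1 : c ≠ 1) :
    FreeAbelianGroup.of ⟨x, hx0, hx1⟩ - FreeAbelianGroup.of ⟨y, hy0, hy1⟩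
      + FreeAbelianGroup.of ⟨a, ha0, ha1⟩ + FreeAbelianGroup.of ⟨b, hb0, hb1⟩
      - FreeAbelianGroup.of ⟨c, hc0, hc1⟩ ∈ AddSubgroup.closure (fiveTermSet F) := by
  subst ha hb hc
  exact AddSubgroup.subset_closure
    ⟨x, y, ⟨hx0, hx1⟩, ⟨hy0, hy1⟩, hxy, ⟨ha0, ha1⟩, ⟨hb0, hb1⟩, ⟨hc0, hc1⟩, rfl⟩

/-- Over a field of characteristic zero containing square roots of `-1` and
`-3`, the element `c_F = {x} + {1-x}` vanishes in the pre-Bloch group `P(F)`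
for every `x ∈ F** = F \ {0,1}`. -/
theorem cF_eq_zero (F : Type*) [Field F] [CharZero F]
    (i s : F) (hi : i ^ 2 = -1) (hs : s ^ 2 = -3) (x : F) (hx0 : x ≠ 0) (hx1 : x ≠ 1) :
    br x hx0 hx1
      + br (1 - x) (sub_ne_zero.mpr (Ne.symm hx1)) (fun h => hx0 (sub_eq_self.mp h)) = 0 := by
  have quot : ∀ (a b : FreeAbelianGroup {w : F // w ≠ 0 ∧ w ≠ 1}),
      a + b ∈ AddSubgroup.closure (fiveTermSet F) →
      (QuotientAddGroup.mk a : PreBloch F) + QuotientAddGroup.mk b = 0 := by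
    intro a b h
    rw [← QuotientAddGroup.mk_add]
    exact (QuotientAddGroup.eq_zero_iff _).mpr h
  set z : F := (1 + s) / 2 with hzdef
  set u : F := i * (1 - s) / 2 with hudef
  have hzw : z * (1 - z) = 1 := by rw [hzdef]; ring_nf; linear_combination (-1/4 : F) * hs
  have hu2 : u ^ 2 = z := by
    rw [hudef, hzdef]; ring_nf; linear_combination ((1 - s) ^ 2 / 4) * hi - (1 / 4) * hs
  have hz0 : z ≠ 0 := left_ne_zero_of_mul_eq_one hzw
  have h1z0 : (1 : F) - z ≠ 0 := right_ne_zero_of_mul_eq_one hzw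
  have hz1 : z ≠ 1 := fun h => by simp [h] at h1z0
  have h1z1 : (1 : F) - z ≠ 1 := fun h => hz0 (by linear_combination -h)
  have hu0 : u ≠ 0 := fun h => hz0 (by rw [← hu2, h]; ring)
  have hu1 : u ≠ 1 := fun h => hz1 (by rw [← hu2, h]; ring)
  have hun1 : u ≠ -1 := fun h => hz1 (by rw [← hu2, h]; ring)
  have huu : u * u = z := by rw [← hu2]; ring
  have h1u0 : 1 / u ≠ 0 := one_div_ne_zero hu0
  have h1u1 : 1 / u ≠ 1 := fun h => hu1 ((div_eq_one_iff_eq hu0).mp h).symm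
  have hxy3 : u ≠ 1 / u := fun h => hz1 (by rw [← hu2]; field_simp at h; linear_combination h)
  have h1mu0 : (1 : F) - 1 / u ≠ 0 := sub_ne_zero.mpr (Ne.symm h1u1)
  have h1mu0' : (1 : F) - u ≠ 0 := sub_ne_zero.mpr (Ne.symm hu1)
  have ha3 : 1 - z = (1 / u) / u := by
    rw [div_div, huu, eq_div_iff hz0]; linear_combination hzw
  have hb3 : -u = (1 - u) / (1 - 1 / u) := by
    rw [eq_div_iff h1mu0]; field_simp; try ring
  have hc3 : -(1 / u) = (1 / u) * (1 - u) / (u * (1 - 1 / u)) := by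
    rw [eq_div_iff (mul_ne_zero hu0 h1mu0)]; field_simp; try ring
  have ha4 : z = u / (1 / u) := by rw [div_eq_mul_inv, one_div, inv_inv, huu]
  have hb4 : -(1 / u) = (1 - 1 / u) / (1 - u) := by
    rw [eq_div_iff h1mu0']; field_simp; try ring
  have hc4 : -u = u * (1 - 1 / u) / ((1 / u) * (1 - u)) := by
    rw [eq_div_iff (mul_ne_zero h1u0 h1mu0')]; field_simp; try ring
  have hnu0 : -u ≠ 0 := neg_ne_zero.mpr hu0
  have hnu1 : -u ≠ 1 := fun h => hun1 (by linear_combination -h)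
  have hn1u0 : -(1 / u) ≠ 0 := neg_ne_zero.mpr h1u0
  have hn1u1 : -(1 / u) ≠ 1 := fun h => hun1 (by field_simp at h; linear_combination -h)
  have m3 := cF_rel_mem hu0 hu1 h1u0 h1u1 hxy3 ha3 hb3 hc3 h1z0 h1z1 hnu0 hnu1 hn1u0 hn1u1
  have m4 := cF_rel_mem h1u0 h1u1 hu0 hu1 (Ne.symm hxy3) ha4 hb4 hc4 hz0 hz1 hn1u0 hn1u1
    hnu0 hnu1
  have mem34 : (FreeAbelianGroup.of (⟨z, hz0, hz1⟩ : {w : F // w ≠ 0 ∧ w ≠ 1})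
      + FreeAbelianGroup.of ⟨1 - z, h1z0, h1z1⟩) ∈ AddSubgroup.closure (fiveTermSet F) := by
    have key : FreeAbelianGroup.of (⟨z, hz0, hz1⟩ : {w : F // w ≠ 0 ∧ w ≠ 1})
        + FreeAbelianGroup.of ⟨1 - z, h1z0, h1z1⟩
        = (FreeAbelianGroup.of (⟨u, hu0, hu1⟩ : {w : F // w ≠ 0 ∧ w ≠ 1})
            - FreeAbelianGroup.of ⟨1 / u, h1u0, h1u1⟩
            + FreeAbelianGroup.of ⟨1 - z, h1z0, h1z1⟩
            + FreeAbelianGroup.of ⟨-u, hnu0, hnu1⟩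
            - FreeAbelianGroup.of ⟨-(1 / u), hn1u0, hn1u1⟩)
          + (FreeAbelianGroup.of (⟨1 / u, h1u0, h1u1⟩ : {w : F // w ≠ 0 ∧ w ≠ 1})
            - FreeAbelianGroup.of ⟨u, hu0, hu1⟩
            + FreeAbelianGroup.of ⟨z, hz0, hz1⟩
            + FreeAbelianGroup.of ⟨-(1 / u), hn1u0, hn1u1⟩
            - FreeAbelianGroup.of ⟨-u, hnu0, hnu1⟩) := by abel
    rw [key]
    exact add_mem m3 m4
  by_cases hxz : x = z
  · subst hxz
    exact quot _ _ mem34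
  · have h1x0 : (1 : F) - x ≠ 0 := sub_ne_zero.mpr (Ne.symm hx1)
    have h1x1 : (1 : F) - x ≠ 1 := fun h => hx0 (by linear_combination -h)
    have zx0 : z / x ≠ 0 := div_ne_zero hz0 hx0
    have zx1 : z / x ≠ 1 := fun h => hxz ((div_eq_one_iff_eq hx0).mp h).symm
    have b0 : (1 - x) / (1 - z) ≠ 0 := div_ne_zero h1x0 h1z0
    have b1 : (1 - x) / (1 - z) ≠ 1 := fun h =>
      hxz (by have h' := (div_eq_one_iff_eq h1z0).mp h; linear_combination -h')
    have c0 : z * (1 - x) / (x * (1 - z)) ≠ 0 :=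
      div_ne_zero (mul_ne_zero hz0 h1x0) (mul_ne_zero hx0 h1z0)
    have c1 : z * (1 - x) / (x * (1 - z)) ≠ 1 := fun h =>
      hxz (by have h' := (div_eq_one_iff_eq (mul_ne_zero hx0 h1z0)).mp h; linear_combination -h')
    have h1zx : (1 : F) - z ≠ 1 - x := fun h => hxz (by linear_combination h)
    have hb2 : z / x = (1 - (1 - z)) / (1 - (1 - x)) := by rw [sub_sub_cancel, sub_sub_cancel]
    have hc2 : z * (1 - x) / (x * (1 - z))
        = (1 - x) * (1 - (1 - z)) / ((1 - z) * (1 - (1 - x))) := by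
      rw [sub_sub_cancel, sub_sub_cancel]; ring
    have m1 := cF_rel_mem hx0 hx1 hz0 hz1 hxz rfl rfl rfl zx0 zx1 b0 b1 c0 c1
    have m2 := cF_rel_mem h1z0 h1z1 h1x0 h1x1 h1zx rfl hb2 hc2 b0 b1 zx0 zx1 c0 c1
    have main : (FreeAbelianGroup.of (⟨x, hx0, hx1⟩ : {w : F // w ≠ 0 ∧ w ≠ 1})
        + FreeAbelianGroup.of ⟨1 - x, h1x0, h1x1⟩) ∈ AddSubgroup.closure (fiveTermSet F) := by
      have key : FreeAbelianGroup.of (⟨x, hx0, hx1⟩ : {w : F // w ≠ 0 ∧ w ≠ 1})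
          + FreeAbelianGroup.of ⟨1 - x, h1x0, h1x1⟩
          = ((FreeAbelianGroup.of (⟨x, hx0, hx1⟩ : {w : F // w ≠ 0 ∧ w ≠ 1})
              - FreeAbelianGroup.of ⟨z, hz0, hz1⟩
              + FreeAbelianGroup.of ⟨z / x, zx0, zx1⟩
              + FreeAbelianGroup.of ⟨(1 - x) / (1 - z), b0, b1⟩
              - FreeAbelianGroup.of ⟨z * (1 - x) / (x * (1 - z)), c0, c1⟩)
            - (FreeAbelianGroup.of (⟨1 - z, h1z0, h1z1⟩ : {w : F // w ≠ 0 ∧ w ≠ 1})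
              - FreeAbelianGroup.of ⟨1 - x, h1x0, h1x1⟩
              + FreeAbelianGroup.of ⟨(1 - x) / (1 - z), b0, b1⟩
              + FreeAbelianGroup.of ⟨z / x, zx0, zx1⟩
              - FreeAbelianGroup.of ⟨z * (1 - x) / (x * (1 - z)), c0, c1⟩))
            + (FreeAbelianGroup.of (⟨z, hz0, hz1⟩ : {w : F // w ≠ 0 ∧ w ≠ 1})
              + FreeAbelianGroup.of ⟨1 - z, h1z0, h1z1⟩) := by abel
      rw [key]
      exact add_mem (sub_mem m1 m2) mem34
    exact quot _ _ main
end

section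
/- Let F be a field and let x, y ∈ Fˣ be units such that for all integers a, b, the equality x^a = y^b implies a = 0 and b = 0. Then x ∧ y ≠ 0 in ∧²ℤ Fˣ, the second exterior power over ℤ of the units group of F. -/
/-- The image of a pair `(x, y)` under the canonical alternating bilinear map
`M × M → ⋀²_R M` into the second exterior power of `M` over `R`. -/
noncomputable def wedgePair (R M : Type*) [CommRing R] [AddCommGroup M] [Module R M]
    (x y : M) : ⋀[R]^2 M :=
  ⟨ExteriorAlgebra.ιMulti R 2 ![x, y],
    ExteriorAlgebra.ιMulti_range R 2 (Set.mem_range_self _)⟩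

/-- `Matrix.detRowAlternating` over `ℚ`, restricted to `ℤ`-scalars. -/
noncomputable def detZ : (Fin 2 → ℚ) [⋀^Fin 2]→ₗ[ℤ] ℚ :=
  { toMultilinearMap :=
      (Matrix.detRowAlternating (n := Fin 2) (R := ℚ)).toMultilinearMap.restrictScalars ℤ
    map_eq_zero_of_eq' := fun v i j hv hij =>
      (Matrix.detRowAlternating (n := Fin 2) (R := ℚ)).map_eq_zero_of_eq v hv hij }

lemma detZ_apply (v : Fin 2 → Fin 2 → ℚ) : detZ v = (Matrix.of v).det := rfl

/-- If `x, y ∈ Fˣ` are units of a field such that `x^a = y^b` (for integers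
`a, b`) only when `a = b = 0`, then `x ∧ y ≠ 0` in `⋀²_ℤ Fˣ`, the second
exterior power over `ℤ` of the (multiplicatively written) group of units,
regarded additively as a `ℤ`-module. -/
theorem wedge_ne_zero_of_multiplicatively_independent (F : Type*) [Field F] (x y : Fˣ)
    (h : ∀ a b : ℤ, x ^ a = y ^ b → a = 0 ∧ b = 0) :
    wedgePair ℤ (Additive Fˣ) (Additive.ofMul x) (Additive.ofMul y) ≠ 0 := by
  set M := Additive Fˣ
  set ox : M := Additive.ofMul x
  set oy : M := Additive.ofMul y
  -- linear independence of `ox, oy` over `ℤ`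
  have hLI : LinearIndependent ℤ ![ox, oy] := by
    rw [LinearIndependent.pair_iff]
    intro s t hst
    have hxy : x ^ s = y ^ (-t) := by
      have : Additive.ofMul (x ^ s * y ^ t) = (0 : M) := by
        rw [ofMul_mul, ofMul_zpow, ofMul_zpow]; exact hst
      have h1 : x ^ s * y ^ t = 1 := this
      rw [zpow_neg]
      exact eq_inv_of_mul_eq_one_left (mul_comm (x ^ s) (y ^ t) ▸ h1)
    obtain ⟨hs, ht⟩ := h s (-t) hxy
    exact ⟨hs, by omega⟩
  -- basis of the span
  set S := Submodule.span ℤ (Set.range ![ox, oy]) with hS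
  let b : Module.Basis (Fin 2) ℤ S := Module.Basis.span hLI
  have hmem : ∀ i : Fin 2, (![ox, oy] i) ∈ S := fun i =>
    Submodule.subset_span (Set.mem_range_self i)
  -- ℚ-valued coordinate functionals on S
  let c : Fin 2 → (S →ₗ[ℤ] ℚ) := fun i => (Algebra.linearMap ℤ ℚ) ∘ₗ (b.coord i)
  -- extend to M using that ℚ is an injective ℤ-module
  have hext : ∀ i : Fin 2, ∃ f : M →ₗ[ℤ] ℚ, f ∘ₗ S.subtype = c i := fun i =>
    (Module.Baer.of_divisible ℚ).extension_property S.subtype Subtype.val_injective (c i)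
  choose f hf using hext
  have hfc : ∀ i j : Fin 2, f i (![ox, oy] j) = if j = i then 1 else 0 := by
    intro i j
    have h1 : f i (![ox, oy] j) = c i ⟨![ox, oy] j, hmem j⟩ := by
      have := congrArg (fun g => g ⟨![ox, oy] j, hmem j⟩)
        (congrArg DFunLike.coe (hf i))
      simpa using this
    have hb : (⟨![ox, oy] j, hmem j⟩ : S) = b j :=
      Subtype.ext (by rw [Module.Basis.span_apply])
    rw [h1, hb]
    simp only [c, LinearMap.comp_apply, Module.Basis.coord_apply, Module.Basis.repr_self]
    by_cases hij : j = i
    · subst hij; simp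
    · simp [Finsupp.single_apply, hij]
  -- the alternating form
  let L : M →ₗ[ℤ] (Fin 2 → ℚ) := LinearMap.pi f
  let B : M [⋀^Fin 2]→ₗ[ℤ] ℚ := detZ.compLinearMap L
  have hB : B ![ox, oy] = 1 := by
    have : B ![ox, oy] = (Matrix.of fun j i => f i (![ox, oy] j)).det := by
      simp only [B, AlternatingMap.compLinearMap_apply]
      rw [detZ_apply]
      rfl
    rw [this, Matrix.det_fin_two]
    simp [hfc]
  -- conclude
  intro hzero
  have hval : ExteriorAlgebra.ιMulti ℤ 2 ![ox, oy] = 0 :=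
    congrArg Subtype.val hzero
  let fam : ∀ i : ℕ, M [⋀^Fin i]→ₗ[ℤ] ℚ := fun i =>
    match i with
    | 2 => B
    | _ => 0
  have h2 : ExteriorAlgebra.liftAlternating fam (ExteriorAlgebra.ιMulti ℤ 2 ![ox, oy])
      = fam 2 ![ox, oy] := ExteriorAlgebra.liftAlternating_apply_ιMulti fam _
  rw [hval, map_zero] at h2
  have hBz : B ![ox, oy] = 0 := h2.symm
  rw [hB] at hBz
  exact one_ne_zero hBz
end

section
/- Let A be an abelian group (written additively, regarded as a ℤ-module) and let x, y ∈ A be such that for all integers a, b, the equality a·x = b·y implies a = 0 and b = 0. Then the image of (x, y) under the canonical alternating map into the second exterior power ∧²ℤ A is nonzero. -/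
open scoped nonZeroDivisors


/-- If `x, y` are elements of an abelian group `A` (regarded as a `ℤ`-module)
such that `a • x = b • y` (for integers `a, b`) only when `a = b = 0`, then the
image of `(x, y)` under the canonical alternating map into the second exterior
power `⋀²_ℤ A` is nonzero. -/
theorem wedge_ne_zero_of_independent (A : Type*) [AddCommGroup A] (x y : A)
    (h : ∀ a b : ℤ, a • x = b • y → a = 0 ∧ b = 0) :
    wedgePair ℤ A x y ≠ 0 := by
  letI : Module ℤ (LocalizedModule ℤ⁰ A) := OreLocalization.instModuleOfIsScalarTower
  let K := FractionRing ℤ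
  let t := LocalizedModule.mkLinearMap ℤ⁰ A
  have hz : ∀ z : A, t z = 0 → ∃ s : ℤ⁰, (s : ℤ) • z = 0 := fun z hzz =>
    (IsLocalizedModule.eq_zero_iff ℤ⁰ t).mp hzz
  have key : ∀ a b : ℤ, a • x + b • y = 0 → a = 0 ∧ b = 0 := by
    intro a b hab
    have : a • x = (-b) • y := by rw [neg_smul, eq_neg_iff_add_eq_zero]; exact hab
    obtain ⟨ha, hb⟩ := h a (-b) this
    exact ⟨ha, by omega⟩
  have li : LinearIndependent K ![t x, t y] := by
    rw [LinearIndependent.pair_iff]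
    intro q r hqr
    obtain ⟨⟨a, s⟩, hq⟩ := IsLocalization.surj ℤ⁰ q
    obtain ⟨⟨b, s'⟩, hr⟩ := IsLocalization.surj ℤ⁰ r
    dsimp only at hq hr
    have e1 : (algebraMap ℤ K ((s : ℤ) * (s' : ℤ))) • (q • t x) = t (((s' : ℤ) * a) • x) := by
      rw [smul_smul]
      have e : algebraMap ℤ K ((s : ℤ) * (s' : ℤ)) * q = algebraMap ℤ K ((s' : ℤ) * a) := by
        rw [map_mul, map_mul]
        linear_combination (algebraMap ℤ K (s' : ℤ)) * hq
      rw [e, algebraMap_smul]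
      exact (t.map_smul _ x).symm
    have e2 : (algebraMap ℤ K ((s : ℤ) * (s' : ℤ))) • (r • t y) = t (((s : ℤ) * b) • y) := by
      rw [smul_smul]
      have e : algebraMap ℤ K ((s : ℤ) * (s' : ℤ)) * r = algebraMap ℤ K ((s : ℤ) * b) := by
        rw [map_mul, map_mul]
        linear_combination (algebraMap ℤ K (s : ℤ)) * hr
      rw [e, algebraMap_smul]
      exact (t.map_smul _ y).symm
    have h2 : t (((s' : ℤ) * a) • x + ((s : ℤ) * b) • y) = 0 := by
      rw [t.map_add, ← e1, ← e2, ← smul_add, hqr, smul_zero]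
    obtain ⟨c, hc⟩ := hz _ h2
    rw [smul_add, smul_smul, smul_smul] at hc
    obtain ⟨ha, hb⟩ := key _ _ hc
    have hs0 : (s : ℤ) ≠ 0 := nonZeroDivisors.coe_ne_zero s
    have hs'0 : (s' : ℤ) ≠ 0 := nonZeroDivisors.coe_ne_zero s'
    have hc0 : (c : ℤ) ≠ 0 := nonZeroDivisors.coe_ne_zero c
    have ha0 : a = 0 := by
      rcases mul_eq_zero.mp ha with h1 | h1
      · exact absurd h1 hc0
      · rcases mul_eq_zero.mp h1 with h2 | h2
        exacts [absurd h2 hs'0, h2]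
    have hb0 : b = 0 := by
      rcases mul_eq_zero.mp hb with h1 | h1
      · exact absurd h1 hc0
      · rcases mul_eq_zero.mp h1 with h2 | h2
        exacts [absurd h2 hs0, h2]
    have hsK : algebraMap ℤ K (s : ℤ) ≠ 0 := by
      simpa using (IsFractionRing.to_map_eq_zero_iff (K := K)).not.mpr hs0
    have hs'K : algebraMap ℤ K (s' : ℤ) ≠ 0 := by
      simpa using (IsFractionRing.to_map_eq_zero_iff (K := K)).not.mpr hs'0
    constructor
    · have : q * algebraMap ℤ K (s : ℤ) = 0 := by rw [hq, ha0, map_zero]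
      rcases mul_eq_zero.mp this with h1 | h1
      exacts [h1, absurd h1 hsK]
    · have : r * algebraMap ℤ K (s' : ℤ) = 0 := by rw [hr, hb0, map_zero]
      rcases mul_eq_zero.mp this with h1 | h1
      exacts [h1, absurd h1 hs'K]
  -- dual functionals
  let p := Submodule.span K (Set.range ![t x, t y])
  let B : Module.Basis (Fin 2) K p := Module.Basis.span li
  obtain ⟨φ, hφ⟩ := LinearMap.exists_extend (B.coord 0)
  obtain ⟨ψ, hψ⟩ := LinearMap.exists_extend (B.coord 1)
  have hBx : ((B 0 : p) : LocalizedModule ℤ⁰ A) = t x := by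
    rw [Module.Basis.span_apply]; rfl
  have hBy : ((B 1 : p) : LocalizedModule ℤ⁰ A) = t y := by
    rw [Module.Basis.span_apply]; rfl
  have hφx : φ (t x) = 1 := by
    have := LinearMap.congr_fun hφ (B 0)
    simp only [LinearMap.comp_apply, Submodule.subtype_apply, hBx, Module.Basis.coord_apply,
      Module.Basis.repr_self, Finsupp.single_eq_same] at this
    exact this
  have hφy : φ (t y) = 0 := by
    have := LinearMap.congr_fun hφ (B 1)
    simp only [LinearMap.comp_apply, Submodule.subtype_apply, hBy, Module.Basis.coord_apply,
      Module.Basis.repr_self] at this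
    simpa using this
  have hψx : ψ (t x) = 0 := by
    have := LinearMap.congr_fun hψ (B 0)
    simp only [LinearMap.comp_apply, Submodule.subtype_apply, hBx, Module.Basis.coord_apply,
      Module.Basis.repr_self] at this
    simpa using this
  have hψy : ψ (t y) = 1 := by
    have := LinearMap.congr_fun hψ (B 1)
    simp only [LinearMap.comp_apply, Submodule.subtype_apply, hBy, Module.Basis.coord_apply,
      Module.Basis.repr_self, Finsupp.single_eq_same] at this
    exact this
  -- the alternating map
  let φ' : A →ₗ[ℤ] K := (φ.toAddMonoidHom.comp t.toAddMonoidHom).toIntLinearMap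
  let ψ' : A →ₗ[ℤ] K := (ψ.toAddMonoidHom.comp t.toAddMonoidHom).toIntLinearMap
  let ρ : A →ₗ[ℤ] (Fin 2 → K) := LinearMap.pi ![φ', ψ']
  let d : (Fin 2 → K) [⋀^Fin 2]→ₗ[K] K := (Pi.basisFun K (Fin 2)).det
  let g : A [⋀^Fin 2]→ₗ[ℤ] K :=
    { toMultilinearMap :=
        (MultilinearMap.restrictScalars ℤ d.toMultilinearMap).compLinearMap fun _ => ρ
      map_eq_zero_of_eq' := fun v i j hij hne =>
        d.map_eq_zero_of_eq _ (by simp [hij]) hne }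
  have hg : g ![x, y] = 1 := by
    show d (fun i => ρ (![x, y] i)) = 1
    rw [Module.Basis.det_apply, Matrix.det_fin_two]
    simp only [Module.Basis.toMatrix_apply, Pi.basisFun_repr]
    simp [ρ, φ', ψ', hφx, hφy, hψx, hψy, LinearMap.pi_apply]
  intro hw
  have hv : ExteriorAlgebra.ιMulti ℤ 2 ![x, y] = 0 := congrArg Subtype.val hw
  let f : ∀ i, A [⋀^Fin i]→ₗ[ℤ] K := Function.update (fun i => 0) 2 g
  have hlift := ExteriorAlgebra.liftAlternating_apply_ιMulti (R := ℤ) f ![x, y]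
  rw [hv, map_zero] at hlift
  have hf2 : f 2 = g := by simp [f]
  rw [hf2, hg] at hlift
  exact one_ne_zero hlift.symm
end

section
/- Let F be a field of characteristic zero. Then 3 ∧ (−2) ≠ 0 in ∧²ℤ Fˣ, the second exterior power over ℤ of the units group of F, where 3 and −2 denote the corresponding units of F. -/
private lemma padicValRat_zpow' (p : ℕ) [Fact p.Prime] {q : ℚ} (hq : q ≠ 0) (n : ℤ) :
    padicValRat p (q ^ n) = n * padicValRat p q := by
  cases n with
  | ofNat k =>
      rw [Int.ofNat_eq_natCast, zpow_natCast, padicValRat.pow q]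
  | negSucc k =>
      rw [zpow_negSucc, padicValRat.inv, padicValRat.pow q, Int.negSucc_eq]
      push_cast
      ring

private lemma key_rat' {n m : ℤ} (h : (3:ℚ) ^ n * (-2:ℚ) ^ m = 1) : n = 0 ∧ m = 0 := by
  have h3 : (3:ℚ) ≠ 0 := by norm_num
  have h2 : (-2:ℚ) ≠ 0 := by norm_num
  have hv3 : padicValRat 3 ((3:ℚ) ^ n * (-2:ℚ) ^ m) = 0 := by rw [h]; simp [padicValRat]
  have hv2 : padicValRat 2 ((3:ℚ) ^ n * (-2:ℚ) ^ m) = 0 := by rw [h]; simp [padicValRat]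
  rw [padicValRat.mul (zpow_ne_zero _ h3) (zpow_ne_zero _ h2),
    padicValRat_zpow' 3 h3, padicValRat_zpow' 3 h2] at hv3
  rw [padicValRat.mul (zpow_ne_zero _ h3) (zpow_ne_zero _ h2),
    padicValRat_zpow' 2 h3, padicValRat_zpow' 2 h2] at hv2
  have e33 : padicValRat 3 (3:ℚ) = 1 := by
    simpa using padicValRat.self (p := 3) (by norm_num)
  have e32 : padicValRat 3 (-2:ℚ) = 0 := by
    rw [padicValRat.neg]
    have : padicValRat 3 ((2:ℤ) : ℚ) = padicValInt 3 2 := padicValRat.of_int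
    rw [show ((2:ℤ):ℚ) = (2:ℚ) by norm_num] at this
    rw [this]
    simp [padicValInt, padicValNat.eq_zero_of_not_dvd (show ¬ (3:ℕ) ∣ 2 by norm_num)]
  have e22 : padicValRat 2 (-2:ℚ) = 1 := by
    rw [padicValRat.neg]
    simpa using padicValRat.self (p := 2) (by norm_num)
  have e23 : padicValRat 2 (3:ℚ) = 0 := by
    have : padicValRat 2 ((3:ℤ) : ℚ) = padicValInt 2 3 := padicValRat.of_int
    rw [show ((3:ℤ):ℚ) = (3:ℚ) by norm_num] at this
    rw [this]
    simp [padicValInt, padicValNat.eq_zero_of_not_dvd (show ¬ (2:ℕ) ∣ 3 by norm_num)]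
  rw [e33, e32] at hv3
  rw [e22, e23] at hv2
  omega

/-- In a field of characteristic zero, `3 ∧ (-2) ≠ 0` in `⋀²_ℤ Fˣ`, the second
exterior power over `ℤ` of the group of units of `F` (written additively as a
`ℤ`-module), where `3` and `-2` denote the corresponding units of `F`. -/
theorem three_wedge_neg_two_ne_zero (F : Type*) [Field F] [CharZero F] :
    wedgePair ℤ (Additive Fˣ)
      (Additive.ofMul (Units.mk0 (3 : F) (by norm_num)))
      (Additive.ofMul (Units.mk0 (-2 : F) (by norm_num))) ≠ 0 := by
  set u3 : Fˣ := Units.mk0 (3 : F) (by norm_num) with hu3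
  set u2 : Fˣ := Units.mk0 (-2 : F) (by norm_num) with hu2
  set M := Additive Fˣ
  set u : M := Additive.ofMul u3
  set v : M := Additive.ofMul u2
  -- the linear map (Fin 2 → ℤ) → M sending (n, m) to n • u + m • v
  let f : (Fin 2 → ℤ) →ₗ[ℤ] M :=
    { toFun := fun c => c 0 • u + c 1 • v
      map_add' := fun c d => by
        show (c 0 + d 0) • u + (c 1 + d 1) • v = (c 0 • u + c 1 • v) + (d 0 • u + d 1 • v)
        rw [add_zsmul, add_zsmul]; abel
      map_smul' := fun r c => by
        show (r * c 0) • u + (r * c 1) • v = r • (c 0 • u + c 1 • v)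
        rw [mul_zsmul, mul_zsmul, zsmul_add] }
  have hinj : Function.Injective f := by
    rw [← LinearMap.ker_eq_bot, LinearMap.ker_eq_bot']
    intro c hc
    have hc' : c 0 • u + c 1 • v = 0 := hc
    -- translate to a multiplicative statement about units
    have hmul : u3 ^ (c 0) * u2 ^ (c 1) = 1 := by
      have := congrArg Additive.toMul hc'
      exact this
    have hF := congrArg Units.val hmul
    rw [Units.val_mul, Units.val_zpow_eq_zpow_val, Units.val_zpow_eq_zpow_val] at hF
    simp only [hu3, hu2, Units.val_mk0, Units.val_one] at hF
    have hcast : ((((3:ℚ) ^ (c 0) * (-2:ℚ) ^ (c 1) : ℚ) : F)) = ((1:ℚ) : F) := by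
      push_cast; exact hF
    have hq : (3:ℚ) ^ (c 0) * (-2:ℚ) ^ (c 1) = 1 := by exact_mod_cast hcast
    obtain ⟨h0, h1⟩ := key_rat' hq
    funext i
    fin_cases i <;> simp [h0, h1]
  -- extend the coordinate functionals to all of M using that ℚ is divisible
  have baer : Module.Baer ℤ ℚ := Module.Baer.of_divisible ℚ
  obtain ⟨a, ha⟩ := baer.extension_property f hinj (LinearMap.proj (0 : Fin 2) ∘ₗ
    (LinearMap.pi fun i : Fin 2 => (Int.castAddHom ℚ).toIntLinearMap.comp (LinearMap.proj i)))
  obtain ⟨b, hb⟩ := baer.extension_property f hinj (LinearMap.proj (1 : Fin 2) ∘ₗ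
    (LinearMap.pi fun i : Fin 2 => (Int.castAddHom ℚ).toIntLinearMap.comp (LinearMap.proj i)))
  have hfu : f ![1, 0] = u := by simp [f]
  have hfv : f ![0, 1] = v := by simp [f]
  have hau : a u = 1 := by
    rw [← hfu]; have := congrFun (congrArg DFunLike.coe ha) ![(1:ℤ), 0]; simpa using this
  have hav : a v = 0 := by
    rw [← hfv]; have := congrFun (congrArg DFunLike.coe ha) ![(0:ℤ), 1]; simpa using this
  have hbu : b u = 0 := by
    rw [← hfu]; have := congrFun (congrArg DFunLike.coe hb) ![(1:ℤ), 0]; simpa using this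
  have hbv : b v = 1 := by
    rw [← hfv]; have := congrFun (congrArg DFunLike.coe hb) ![(0:ℤ), 1]; simpa using this
  -- the alternating map M² → ℚ given by the 2×2 determinant of (a, b)
  let det2 : (Fin 2 → ℚ) [⋀^Fin 2]→ₗ[ℤ] ℚ :=
    { toMultilinearMap :=
        (Matrix.detRowAlternating (n := Fin 2) (R := ℚ)).toMultilinearMap.restrictScalars ℤ
      map_eq_zero_of_eq' := fun w i j hw hij =>
        (Matrix.detRowAlternating (n := Fin 2) (R := ℚ)).map_eq_zero_of_eq w hw hij }
  let φ : M [⋀^Fin 2]→ₗ[ℤ] ℚ := det2.compLinearMap (LinearMap.pi ![a, b])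
  have hφ : φ ![u, v] = 1 := by
    have h1 : φ ![u, v] =
        Matrix.det (Matrix.of fun i => (LinearMap.pi ![a, b]) (![u, v] i)) := rfl
    rw [h1, Matrix.det_fin_two]
    simp [Matrix.of_apply, LinearMap.pi_apply, hau, hav, hbu, hbv]
  intro hzero
  have hval : (ExteriorAlgebra.ιMulti ℤ 2 ![u, v] : ExteriorAlgebra ℤ M) = 0 := by
    have := congrArg Subtype.val hzero
    simpa [wedgePair] using this
  have := congrArg (ExteriorAlgebra.liftAlternating
    (R := ℤ) (M := M) (N := ℚ) (Function.update (fun _ => 0) 2 φ)) hval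
  rw [ExteriorAlgebra.liftAlternating_apply_ιMulti, map_zero] at this
  rw [Function.update_self] at this
  rw [hφ] at this
  exact one_ne_zero this
end

section
/- Let F be a field and let x, y ∈ F** := F \ {0,1} with x ≠ y. Set t := y(1−x)/(x(1−y)). Then in ∧²ℤ Fˣ the five-term identity holds: x ∧ (1−x) − y ∧ (1−y) + (y/x) ∧ (1 − y/x) + ((1−x)/(1−y)) ∧ (1 − (1−x)/(1−y)) − t ∧ (1 − t) = 0. (Consequently the assignment {z} ↦ z ∧ (1−z) induces a well-defined group homomorphism λ : P(F) → ∧²ℤ Fˣ.) -/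
/-- For nonzero field elements `u, v`, the element `u ∧ v` of `⋀²_ℤ Fˣ`, the
second exterior power over `ℤ` of the group of units of `F` (written additively
as a `ℤ`-module). -/
noncomputable def wedgeF {F : Type*} [Field F] (u v : F) (hu : u ≠ 0) (hv : v ≠ 0) :
    ⋀[ℤ]^2 (Additive Fˣ) :=
  wedgePair ℤ (Additive Fˣ) (Additive.ofMul (Units.mk0 u hu)) (Additive.ofMul (Units.mk0 v hv))

set_option linter.unusedSectionVars false

section
variable {R M : Type*} [CommRing R] [AddCommGroup M] [Module R M]

private lemma update_zero (x y z : M) : Function.update ![x, y] 0 z = ![z, y] := by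
  funext i; fin_cases i <;> simp
private lemma update_one (x y z : M) : Function.update ![x, y] 1 z = ![x, z] := by
  funext i; fin_cases i <;> simp

private lemma wp_add_left (x x' y : M) :
    wedgePair R M (x + x') y = wedgePair R M x y + wedgePair R M x' y := by
  apply Subtype.ext
  show ExteriorAlgebra.ιMulti R 2 ![x + x', y]
      = ExteriorAlgebra.ιMulti R 2 ![x, y] + ExteriorAlgebra.ιMulti R 2 ![x', y]
  rw [← update_zero x y (x + x'), AlternatingMap.map_update_add, update_zero, update_zero]

private lemma wp_add_right (x y y' : M) :
    wedgePair R M x (y + y') = wedgePair R M x y + wedgePair R M x y' := by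
  apply Subtype.ext
  show ExteriorAlgebra.ιMulti R 2 ![x, y + y']
      = ExteriorAlgebra.ιMulti R 2 ![x, y] + ExteriorAlgebra.ιMulti R 2 ![x, y']
  rw [← update_one x y (y + y'), AlternatingMap.map_update_add, update_one, update_one]

private lemma wp_same (x : M) : wedgePair R M x x = 0 := by
  apply Subtype.ext
  show ExteriorAlgebra.ιMulti R 2 ![x, x] = 0
  exact AlternatingMap.map_eq_zero_of_eq _ _ (i := 0) (j := 1) rfl (by decide)
end

section
variable {F : Type*} [Field F]

/-- Wedge of two units. -/
noncomputable def wU (a b : Fˣ) : ⋀[ℤ]^2 (Additive Fˣ) :=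
  wedgePair ℤ (Additive Fˣ) (Additive.ofMul a) (Additive.ofMul b)

private lemma wedgeF_eq_wU (u v : F) (hu : u ≠ 0) (hv : v ≠ 0) :
    wedgeF u v hu hv = wU (Units.mk0 u hu) (Units.mk0 v hv) := rfl

private lemma wU_mul_left (a b c : Fˣ) : wU (a * b) c = wU a c + wU b c := by
  unfold wU; rw [ofMul_mul, wp_add_left]

private lemma wU_mul_right (a b c : Fˣ) : wU a (b * c) = wU a b + wU a c := by
  unfold wU; rw [ofMul_mul, wp_add_right]

private lemma wU_same (a : Fˣ) : wU a a = 0 := wp_same _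

private lemma wU_div_left (a b c : Fˣ) : wU (a / b) c = wU a c - wU b c := by
  have e : a / b * b = a := by simp
  have h := wU_mul_left (a / b) b c
  rw [e] at h
  exact eq_sub_of_add_eq h.symm

private lemma wU_div_right (a b c : Fˣ) : wU a (b / c) = wU a b - wU a c := by
  have e : b / c * c = b := by simp
  have h := wU_mul_right a (b / c) c
  rw [e] at h
  exact eq_sub_of_add_eq h.symm

private lemma wU_anti (a b : Fˣ) : wU a b = - wU b a := by
  have h := wU_same (a * b)
  rw [wU_mul_left, wU_mul_right, wU_mul_right, wU_same, wU_same] at h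
  have h2 : wU a b + wU b a = 0 := by rw [← h]; abel
  exact eq_neg_of_add_eq_zero_left h2

private lemma wedgeF_congr {u v u' v' : F} {hu hv} (h1 : u = u') (h2 : v = v') :
    wedgeF u v hu hv = wedgeF u' v' (h1 ▸ hu) (h2 ▸ hv) := by
  subst h1; subst h2; rfl
end

private lemma wedgeF_wU {F : Type*} [Field F] {u v : F} {hu : u ≠ 0} {hv : v ≠ 0}
    {a b : Fˣ} (ha : (a : F) = u) (hb : (b : F) = v) :
    wedgeF u v hu hv = wU a b := by
  have h1 : Units.mk0 u hu = a := Units.ext (by simp [ha])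
  have h2 : Units.mk0 v hv = b := Units.ext (by simp [hb])
  rw [wedgeF_eq_wU, h1, h2]

/-- The five-term identity in `⋀²_ℤ Fˣ`: for `x ≠ y` in `F** = F \ {0,1}`,
setting `t := y(1-x)/(x(1-y))`, one has
`x ∧ (1-x) - y ∧ (1-y) + (y/x) ∧ (1 - y/x) + ((1-x)/(1-y)) ∧ (1 - (1-x)/(1-y)) - t ∧ (1-t) = 0`.
Consequently `{z} ↦ z ∧ (1-z)` induces a well-defined homomorphism
`λ : P(F) → ⋀²_ℤ Fˣ`. -/
theorem wedge_five_term (F : Type*) [Field F] (x y : F)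
    (hx0 : x ≠ 0) (hx1 : x ≠ 1) (hy0 : y ≠ 0) (hy1 : y ≠ 1) (hxy : x ≠ y) :
    wedgeF x (1 - x) hx0 (sub_ne_zero.mpr (Ne.symm hx1))
      - wedgeF y (1 - y) hy0 (sub_ne_zero.mpr (Ne.symm hy1))
      + wedgeF (y / x) (1 - y / x) (div_ne_zero hy0 hx0)
          (sub_ne_zero.mpr (fun h => hxy (((div_eq_one_iff_eq hx0).mp h.symm).symm)))
      + wedgeF ((1 - x) / (1 - y)) (1 - (1 - x) / (1 - y))
          (div_ne_zero (sub_ne_zero.mpr (Ne.symm hx1)) (sub_ne_zero.mpr (Ne.symm hy1)))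
          (sub_ne_zero.mpr (fun h => hxy (by
            have h2 := (div_eq_one_iff_eq (sub_ne_zero.mpr (Ne.symm hy1))).mp h.symm
            linear_combination -h2)))
      - wedgeF (y * (1 - x) / (x * (1 - y))) (1 - y * (1 - x) / (x * (1 - y)))
          (div_ne_zero (mul_ne_zero hy0 (sub_ne_zero.mpr (Ne.symm hx1)))
            (mul_ne_zero hx0 (sub_ne_zero.mpr (Ne.symm hy1))))
          (sub_ne_zero.mpr (fun h => hxy (by
            have h2 := (div_eq_one_iff_eq
              (mul_ne_zero hx0 (sub_ne_zero.mpr (Ne.symm hy1)))).mp h.symm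
            linear_combination -h2))) = 0 := by
  have hc : (1 : F) - x ≠ 0 := sub_ne_zero.mpr (Ne.symm hx1)
  have hd : (1 : F) - y ≠ 0 := sub_ne_zero.mpr (Ne.symm hy1)
  have he : x - y ≠ 0 := sub_ne_zero.mpr hxy
  set a : Fˣ := Units.mk0 x hx0 with ha
  set b : Fˣ := Units.mk0 y hy0 with hb
  set c : Fˣ := Units.mk0 (1 - x) hc with hcc
  set d : Fˣ := Units.mk0 (1 - y) hd with hdd
  set e : Fˣ := Units.mk0 (x - y) he with hee
  rw [wedgeF_wU (a := a) (b := c) (show (a : F) = x from rfl)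
        (show (c : F) = 1 - x from rfl),
      wedgeF_wU (a := b) (b := d) (show (b : F) = y from rfl)
        (show (d : F) = 1 - y from rfl),
      wedgeF_wU (a := b / a) (b := e / a)
        (show ((b / a : Fˣ) : F) = y / x by rw [Units.val_div_eq_div_val]; rfl)
        (show ((e / a : Fˣ) : F) = 1 - y / x by
          rw [Units.val_div_eq_div_val]; show (x - y) / x = _; field_simp),
      wedgeF_wU (a := c / d) (b := e / d)
        (show ((c / d : Fˣ) : F) = (1 - x) / (1 - y) by rw [Units.val_div_eq_div_val]; rfl)
        (show ((e / d : Fˣ) : F) = 1 - (1 - x) / (1 - y) by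
          rw [Units.val_div_eq_div_val]; show (x - y) / (1 - y) = _; field_simp; ring),
      wedgeF_wU (a := b * c / (a * d)) (b := e / (a * d))
        (show ((b * c / (a * d) : Fˣ) : F) = y * (1 - x) / (x * (1 - y)) by
          rw [Units.val_div_eq_div_val, Units.val_mul, Units.val_mul]; rfl)
        (show ((e / (a * d) : Fˣ) : F) = 1 - y * (1 - x) / (x * (1 - y)) by
          rw [Units.val_div_eq_div_val, Units.val_mul]
          show (x - y) / (x * (1 - y)) = _; field_simp; ring)]
  simp only [wU_div_left, wU_div_right, wU_mul_left, wU_mul_right, wU_same]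
  rw [wU_anti d a, wU_anti c a]
  abel
end
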